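/- Let μ be a soft-median of q under p at temperature λ, set V = ∑_{a∈A} p(a)·q(a), Ã(a) = q(a) − μ, A(a) = q(a) − V, and π*(a) = (1 + ε·tanh(Ã(a)/(2λ)))·p(a). Let π_θ : A → ℝ be any probability vector (π_θ(a) ≥ 0 and ∑_{a∈A} π_θ(a) = 1). Then ∑_{a∈A} π_θ(a)·q(a) ≥ V + ε·∑_{a∈A} p(a)·tanh(Ã(a)/(2λ))·Ã(a) − ∑_{a∈A} |π*(a) − π_θ(a)|·|A(a)|. -/
import Mathlib


theorem stmt9 {A : Type*} [Fintype A] [Nonempty A]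
    (p : A → ℝ) (hp : ∀ a, 0 < p a) (hpsum : ∑ a, p a = 1)
    (q : A → ℝ) (lam : ℝ) (hlam : 0 < lam)
    (ε : ℝ) (hε : ε ∈ Set.Ioo (0 : ℝ) 1)
    (μ : ℝ) (hμ : ∑ a, p a * Real.tanh ((q a - μ) / (2 * lam)) = 0)
    (V : ℝ) (hV : V = ∑ a, p a * q a)
    (Atil Adv : A → ℝ) (hAt : ∀ a, Atil a = q a - μ) (hAd : ∀ a, Adv a = q a - V)
    (πstar : A → ℝ)
    (hπ : ∀ a, πstar a = (1 + ε * Real.tanh (Atil a / (2 * lam))) * p a)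
    (πθ : A → ℝ) (hθnn : ∀ a, 0 ≤ πθ a) (hθsum : ∑ a, πθ a = 1) :
    V + ε * (∑ a, p a * Real.tanh (Atil a / (2 * lam)) * Atil a)
        - ∑ a, |πstar a - πθ a| * |Adv a|
      ≤ ∑ a, πθ a * q a := by
  set t : A → ℝ := fun a => Real.tanh (Atil a / (2 * lam)) with ht
  have hS : ∑ a, p a * t a = 0 := by
    simpa [ht, hAt] using hμ
  have hπsum : ∑ a, πstar a = 1 := by
    have : ∑ a, πstar a = ∑ a, (p a + ε * (p a * t a)) := by
      apply Finset.sum_congr rfl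
      intro a _
      rw [hπ a]; ring
    rw [this, Finset.sum_add_distrib, ← Finset.mul_sum, hS, hpsum]
    ring
  have hA : ∑ a, πstar a * q a
      = V + ε * ∑ a, p a * t a * Atil a := by
    have h1 : ∑ a, πstar a * q a = ∑ a, (p a * q a + ε * (p a * t a * q a)) := by
      apply Finset.sum_congr rfl
      intro a _
      rw [hπ a]; ring
    have h2 : ∑ a, p a * t a * Atil a
        = ∑ a, (p a * t a * q a - μ * (p a * t a)) := by
      apply Finset.sum_congr rfl
      intro a _
      rw [hAt a]; ring
    rw [h1, h2, Finset.sum_add_distrib, Finset.sum_sub_distrib,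
      ← Finset.mul_sum, ← Finset.mul_sum, hS, hV]
    ring
  have hB : ∑ a, (πθ a - πstar a) * Adv a
      = ∑ a, πθ a * q a - ∑ a, πstar a * q a := by
    have : ∑ a, (πθ a - πstar a) * Adv a
        = ∑ a, (πθ a * q a - πstar a * q a - V * (πθ a - πstar a)) := by
      apply Finset.sum_congr rfl
      intro a _
      rw [hAd a]; ring
    rw [this]
    rw [Finset.sum_sub_distrib, Finset.sum_sub_distrib, ← Finset.mul_sum,
      Finset.sum_sub_distrib, hθsum, hπsum]
    ring
  have hC : -∑ a, |πstar a - πθ a| * |Adv a| ≤ ∑ a, (πθ a - πstar a) * Adv a := by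
    rw [← Finset.sum_neg_distrib]
    apply Finset.sum_le_sum
    intro a _
    have : |πstar a - πθ a| * |Adv a| = |(πθ a - πstar a) * Adv a| := by
      rw [abs_mul, abs_sub_comm]
    rw [this]
    exact neg_abs_le _
  linarith
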